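/- arXiv:2212.04187 — 4 statements merged into one kernel-verified Lean document; each statement's English description precedes it below -/
import Mathlib

section
/- Assume the non-parallel condition (NP): A e_i ≠ η A e_j for all indices i ≠ j and all η ∈ ℝ. Let x* ∈ ℝⁿ with support J = supp(x*), and assume the projections of distinct support basis vectors have disjoint supports: supp(P e_j) ∩ supp(P e_k) = ∅ for all j, k ∈ J with j ≠ k. Then x* is the unique minimizer of the weighted ℓ1 norm ‖W x‖₁ = Σ_{i=1}^n w_i |x_i| over all x ∈ ℝⁿ satisfying A x = A x*. -/
open scoped RealInnerProductSpace Classical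

/-- The `i`-th standard basis vector of `ℝⁿ`. -/
noncomputable def stdBasis (n : ℕ) (i : Fin n) : EuclideanSpace ℝ (Fin n) :=
  EuclideanSpace.single i 1

/-- `P`: the orthogonal projection of `ℝⁿ` onto the orthogonal complement of `ker A`
(this equals `A†A` for the Moore–Penrose pseudoinverse `A†`). -/
noncomputable def proj {m n : ℕ} (A : EuclideanSpace ℝ (Fin n) →ₗ[ℝ] EuclideanSpace ℝ (Fin m))
    (x : EuclideanSpace ℝ (Fin n)) : EuclideanSpace ℝ (Fin n) :=
  (Submodule.orthogonalProjectionOnto (LinearMap.ker A)ᗮ x : EuclideanSpace ℝ (Fin n))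

/-- The weights `w i = ‖P e_i‖₂`. -/
noncomputable def wgt {m n : ℕ} (A : EuclideanSpace ℝ (Fin n) →ₗ[ℝ] EuclideanSpace ℝ (Fin m))
    (i : Fin n) : ℝ :=
  ‖proj A (stdBasis n i)‖

/-- The weighted ℓ¹ norm `‖W x‖₁ = ∑ i, w i * |x i|`. -/
noncomputable def wl1 {m n : ℕ} (A : EuclideanSpace ℝ (Fin n) →ₗ[ℝ] EuclideanSpace ℝ (Fin m))
    (x : EuclideanSpace ℝ (Fin n)) : ℝ :=
  ∑ i, wgt A i * |x i|

section Aux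

variable {m n : ℕ} (A : EuclideanSpace ℝ (Fin n) →ₗ[ℝ] EuclideanSpace ℝ (Fin m))

lemma proj_mem (x : EuclideanSpace ℝ (Fin n)) : proj A x ∈ (LinearMap.ker A)ᗮ :=
  (Submodule.orthogonalProjectionOnto _ x).2

lemma coord_eq_inner (x : EuclideanSpace ℝ (Fin n)) (i : Fin n) :
    ⟪x, stdBasis n i⟫ = x i := by
  simp [stdBasis, EuclideanSpace.inner_single_right]

lemma proj_coord (x : EuclideanSpace ℝ (Fin n)) (i : Fin n) :
    proj A x i = ⟪proj A x, proj A (stdBasis n i)⟫ := by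
  rw [← coord_eq_inner (proj A x) i]
  have h2 : stdBasis n i - proj A (stdBasis n i) ∈ ((LinearMap.ker A)ᗮ)ᗮ :=
    Submodule.sub_starProjection_mem_orthogonal _
  have h3 := (Submodule.mem_orthogonal _ _).1 h2 (proj A x) (proj_mem A x)
  rw [inner_sub_right] at h3
  linarith

lemma wgt_pos (i : Fin n) (hi : stdBasis n i ∉ LinearMap.ker A) : 0 < wgt A i := by
  rw [wgt, norm_pos_iff]
  intro h0
  apply hi
  have h1 : Submodule.orthogonalProjectionOnto (LinearMap.ker A)ᗮ (stdBasis n i) = 0 :=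
    Submodule.coe_eq_zero.1 h0
  have h2 : stdBasis n i ∈ ((LinearMap.ker A)ᗮ)ᗮ := Submodule.orthogonalProjectionOnto_eq_zero_iff.1 h1
  rwa [Submodule.orthogonal_orthogonal] at h2

lemma proj_self_coord (i : Fin n) : proj A (stdBasis n i) i = wgt A i ^ 2 := by
  rw [proj_coord, real_inner_self_eq_norm_sq, wgt]

lemma ker_ortho (h : EuclideanSpace ℝ (Fin n)) (hh : h ∈ LinearMap.ker A) (j : Fin n) :
    ∑ i, proj A (stdBasis n j) i * h i = 0 := by
  have h1 : h ∈ ((LinearMap.ker A)ᗮ)ᗮ := Submodule.le_orthogonal_orthogonal _ hh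
  have h2 : ⟪proj A (stdBasis n j), h⟫ = 0 :=
    Submodule.inner_right_of_mem_orthogonal (proj_mem A _) h1
  rw [PiLp.inner_apply] at h2
  simpa [RCLike.inner_apply, mul_comm] using h2

lemma mem_ker_of_proj_eq_zero (x : EuclideanSpace ℝ (Fin n)) (hx : proj A x = 0) :
    x ∈ LinearMap.ker A := by
  have h1 : Submodule.orthogonalProjectionOnto (LinearMap.ker A)ᗮ x = 0 := Submodule.coe_eq_zero.1 hx
  have h2 := Submodule.orthogonalProjectionOnto_eq_zero_iff.1 h1
  rwa [Submodule.orthogonal_orthogonal] at h2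

/-- Strict Cauchy–Schwarz: equality forces proportionality. -/
lemma cs_eq_propor {E : Type*} [NormedAddCommGroup E] [InnerProductSpace ℝ E]
    (x y : E) (hx : x ≠ 0) (h : |⟪x, y⟫| = ‖x‖ * ‖y‖) : ∃ r : ℝ, y = r • x := by
  have hxn : ‖x‖ ≠ 0 := norm_ne_zero_iff.2 hx
  rcases abs_eq (by positivity : (0:ℝ) ≤ ‖x‖ * ‖y‖) |>.1 h with h1 | h1
  · have h3 := inner_eq_norm_mul_iff_real.1 h1
    exact ⟨‖x‖⁻¹ * ‖y‖, by rw [mul_smul, h3, inv_smul_smul₀ hxn]⟩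
  · have h2 : ⟪x, -y⟫ = ‖x‖ * ‖-y‖ := by rw [inner_neg_right, norm_neg]; linarith
    have h3 := inner_eq_norm_mul_iff_real.1 h2
    rw [norm_neg] at h3
    exact ⟨-(‖x‖⁻¹ * ‖y‖), by rw [neg_smul, mul_smul, h3, inv_smul_smul₀ hxn, neg_neg]⟩

/-- Strict bound on cross inner products, from the non-parallel condition. -/
lemma cross_strict (hA : ∀ i, stdBasis n i ∉ LinearMap.ker A)
    (hNP : ∀ i j : Fin n, i ≠ j → ∀ η : ℝ, A (stdBasis n i) ≠ η • A (stdBasis n j))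
    (i j : Fin n) (hij : i ≠ j) :
    |proj A (stdBasis n j) i| < wgt A j * wgt A i := by
  have hle : |proj A (stdBasis n j) i| ≤ wgt A j * wgt A i := by
    rw [proj_coord]; exact abs_real_inner_le_norm _ _
  rcases hle.lt_or_eq with hlt | heq
  · exact hlt
  exfalso
  have hjne : proj A (stdBasis n j) ≠ 0 := by
    intro h0
    exact (wgt_pos A j (hA j)).ne' (by rw [wgt, h0, norm_zero])
  rw [proj_coord] at heq
  obtain ⟨r, hr⟩ := cs_eq_propor (proj A (stdBasis n j)) (proj A (stdBasis n i)) hjne heq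
  have hker : stdBasis n i - r • stdBasis n j ∈ LinearMap.ker A := by
    apply mem_ker_of_proj_eq_zero
    have hlin : proj A (stdBasis n i - r • stdBasis n j)
        = proj A (stdBasis n i) - r • proj A (stdBasis n j) := by
      simp [proj, map_sub, map_smul]
    rw [hlin, hr, sub_self]
  have := LinearMap.mem_ker.1 hker
  rw [map_sub, map_smul, sub_eq_zero] at this
  exact hNP i j hij r this

lemma real_sgn_mul_self {t : ℝ} (ht : t ≠ 0) : Real.sign t * t = |t| := by
  rcases ht.lt_or_gt with h | h
  · rw [Real.sign_of_neg h, abs_of_neg h]; ring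
  · rw [Real.sign_of_pos h, abs_of_pos h]; ring

lemma real_abs_sgn {t : ℝ} (ht : t ≠ 0) : |Real.sign t| = 1 := by
  rcases ht.lt_or_gt with h | h
  · rw [Real.sign_of_neg h]; simp
  · rw [Real.sign_of_pos h]; simp

end Aux

theorem stmt2 {m n : ℕ}
    (A : EuclideanSpace ℝ (Fin n) →ₗ[ℝ] EuclideanSpace ℝ (Fin m))
    (hA : ∀ i, stdBasis n i ∉ LinearMap.ker A)
    (hNP : ∀ i j : Fin n, i ≠ j → ∀ η : ℝ, A (stdBasis n i) ≠ η • A (stdBasis n j))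
    (xstar : EuclideanSpace ℝ (Fin n))
    (hdisj : ∀ j k : Fin n, xstar j ≠ 0 → xstar k ≠ 0 → j ≠ k →
      ∀ i, proj A (stdBasis n j) i = 0 ∨ proj A (stdBasis n k) i = 0) :
    (∀ x : EuclideanSpace ℝ (Fin n), A x = A xstar → wl1 A xstar ≤ wl1 A x) ∧
      ∀ y : EuclideanSpace ℝ (Fin n), A y = A xstar →
        (∀ x : EuclideanSpace ℝ (Fin n), A x = A xstar → wl1 A y ≤ wl1 A x) → y = xstar := by
  classical
  have wpos : ∀ i, 0 < wgt A i := fun i => wgt_pos A i (hA i)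
  set J : Finset (Fin n) := Finset.univ.filter (fun i => xstar i ≠ 0) with hJdef
  set Jc : Finset (Fin n) := Finset.univ.filter (fun i => ¬ xstar i ≠ 0) with hJcdef
  have memJ : ∀ i, i ∈ J ↔ xstar i ≠ 0 := fun i => by simp [hJdef]
  have memJc : ∀ i, i ∈ Jc ↔ xstar i = 0 := fun i => by simp [hJcdef]
  set s : Fin n → ℝ := fun j => Real.sign (xstar j) with hsdef
  set v : Fin n → ℝ := fun i => ∑ j ∈ J, s j / wgt A j * proj A (stdBasis n j) i with hvdef
  -- cross-coordinate vanishing on the support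
  have cross0 : ∀ j ∈ J, ∀ k ∈ J, j ≠ k → proj A (stdBasis n j) k = 0 := by
    intro j hj k hk hne
    rcases hdisj j k ((memJ j).1 hj) ((memJ k).1 hk) hne k with h | h
    · exact h
    · exfalso
      rw [proj_self_coord] at h
      exact (pow_pos (wpos k) 2).ne' h
  -- kernel identity
  have kerid : ∀ x : EuclideanSpace ℝ (Fin n), A x = A xstar → ∀ j ∈ J,
      wgt A j ^ 2 * (x j - xstar j) = -∑ i ∈ Jc, proj A (stdBasis n j) i * (x i - xstar i) := by
    intro x hx j hj
    have hker : (x - xstar) ∈ LinearMap.ker A := by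
      rw [LinearMap.mem_ker, map_sub, hx, sub_self]
    have h0 := ker_ortho A (x - xstar) hker j
    have hco : ∀ i, (x - xstar) i = x i - xstar i := fun i => rfl
    have h1 : ∑ i, proj A (stdBasis n j) i * (x i - xstar i) = 0 := by
      rw [← h0]; exact Finset.sum_congr rfl fun i _ => by rw [hco]
    have hsplit := Finset.sum_filter_add_sum_filter_not Finset.univ
      (fun i => xstar i ≠ 0) (fun i => proj A (stdBasis n j) i * (x i - xstar i))
    have hJpart : ∑ i ∈ J, proj A (stdBasis n j) i * (x i - xstar i)
        = wgt A j ^ 2 * (x j - xstar j) := by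
      rw [Finset.sum_eq_single_of_mem j hj]
      · rw [proj_self_coord]
      · intro k hk hkj
        rw [cross0 j hj k hk (Ne.symm hkj), zero_mul]
    rw [← hJdef, ← hJcdef, hJpart, h1] at hsplit
    linarith
  -- strict dual bound
  have vbound : ∀ i ∈ Jc, |v i| < wgt A i := by
    intro i hi
    have hxi : xstar i = 0 := (memJc i).1 hi
    by_cases hz : ∀ j ∈ J, proj A (stdBasis n j) i = 0
    · have hv0 : v i = 0 := Finset.sum_eq_zero fun j hj => by rw [hz j hj, mul_zero]
      rw [hv0, abs_zero]; exact wpos i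
    · push_neg at hz
      obtain ⟨j0, hj0J, hj0⟩ := hz
      have hxj0 : xstar j0 ≠ 0 := (memJ j0).1 hj0J
      have hij0 : i ≠ j0 := fun h => hxj0 (h ▸ hxi)
      have hv : v i = s j0 / wgt A j0 * proj A (stdBasis n j0) i := by
        rw [hvdef]
        apply Finset.sum_eq_single_of_mem j0 hj0J
        intro j hj hne
        rcases hdisj j j0 ((memJ j).1 hj) hxj0 hne i with h | h
        · rw [h, mul_zero]
        · exact absurd h hj0
      have hb := cross_strict A hA hNP i j0 hij0
      rw [hv, abs_mul, abs_div, real_abs_sgn hxj0, abs_of_pos (wpos j0)]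
      calc 1 / wgt A j0 * |proj A (stdBasis n j0) i|
          < 1 / wgt A j0 * (wgt A j0 * wgt A i) := by
            exact mul_lt_mul_of_pos_left hb (by have := wpos j0; positivity)
        _ = wgt A i := by rw [one_div, inv_mul_cancel_left₀ (wpos j0).ne']
  -- the central estimate
  have key : ∀ x : EuclideanSpace ℝ (Fin n), A x = A xstar →
      wl1 A xstar + ∑ i ∈ Jc, (wgt A i - |v i|) * |x i - xstar i| ≤ wl1 A x := by
    intro x hx
    have hsplit1 := Finset.sum_filter_add_sum_filter_not Finset.univ
      (fun i => xstar i ≠ 0) (fun i => wgt A i * |x i|)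
    have hsplit2 := Finset.sum_filter_add_sum_filter_not Finset.univ
      (fun i => xstar i ≠ 0) (fun i => wgt A i * |xstar i|)
    rw [← hJdef, ← hJcdef] at hsplit1 hsplit2
    -- step 2: the exchange identity
    have exch : ∑ j ∈ J, wgt A j * (s j * (x j - xstar j))
        = -∑ i ∈ Jc, v i * (x i - xstar i) := by
      have e1 : ∀ j ∈ J, wgt A j * (s j * (x j - xstar j))
          = ∑ i ∈ Jc, -(s j / wgt A j * proj A (stdBasis n j) i * (x i - xstar i)) := by
        intro j hj
        have h1 := kerid x hx j hj
        have hwj := (wpos j).ne'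
        have h2 : wgt A j * (s j * (x j - xstar j))
            = s j / wgt A j * (wgt A j ^ 2 * (x j - xstar j)) := by
          field_simp
        rw [h2, h1, ← Finset.sum_neg_distrib, Finset.mul_sum]
        try exact Finset.sum_congr rfl fun i _ => by ring
      rw [Finset.sum_congr rfl e1, Finset.sum_comm, ← Finset.sum_neg_distrib]
      apply Finset.sum_congr rfl
      intro i _
      have hv : v i = ∑ j ∈ J, s j / wgt A j * proj A (stdBasis n j) i := rfl
      rw [hv, Finset.sum_mul, ← Finset.sum_neg_distrib]
    -- per-term estimate on the support
    have hJest : ∀ j ∈ J, wgt A j * |xstar j| + wgt A j * (s j * (x j - xstar j))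
        ≤ wgt A j * |x j| := by
      intro j hj
      have hxj : xstar j ≠ 0 := (memJ j).1 hj
      have h1 : s j * xstar j = |xstar j| := real_sgn_mul_self hxj
      have h2 : s j * x j ≤ |x j| := by
        calc s j * x j ≤ |s j * x j| := le_abs_self _
          _ = |x j| := by rw [abs_mul, real_abs_sgn hxj, one_mul]
      nlinarith [wpos j, (wpos j).le]
    -- per-term estimate off the support
    have hJcest : ∀ i ∈ Jc, wgt A i * |xstar i| + ((wgt A i - |v i|) * |x i - xstar i|
        + v i * (x i - xstar i)) ≤ wgt A i * |x i| := by
      intro i hi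
      have hxi : xstar i = 0 := (memJc i).1 hi
      have h1 : v i * (x i - xstar i) ≤ |v i| * |x i - xstar i| := by
        calc v i * (x i - xstar i) ≤ |v i * (x i - xstar i)| := le_abs_self _
          _ = |v i| * |x i - xstar i| := abs_mul _ _
      rw [hxi]
      simp only [sub_zero, abs_zero, mul_zero, zero_add]
      rw [hxi, sub_zero] at h1
      nlinarith
    have sumJ : ∑ j ∈ J, wgt A j * |xstar j| + ∑ j ∈ J, wgt A j * (s j * (x j - xstar j))
        ≤ ∑ j ∈ J, wgt A j * |x j| := by
      rw [← Finset.sum_add_distrib]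
      exact Finset.sum_le_sum hJest
    have sumJc : ∑ i ∈ Jc, wgt A i * |xstar i|
        + (∑ i ∈ Jc, (wgt A i - |v i|) * |x i - xstar i|
          + ∑ i ∈ Jc, v i * (x i - xstar i))
        ≤ ∑ i ∈ Jc, wgt A i * |x i| := by
      rw [← Finset.sum_add_distrib, ← Finset.sum_add_distrib]
      exact Finset.sum_le_sum hJcest
    rw [wl1, wl1, ← hsplit1, ← hsplit2]
    linarith [exch, sumJ, sumJc]
  constructor
  · intro x hx
    have h := key x hx
    have hnn : 0 ≤ ∑ i ∈ Jc, (wgt A i - |v i|) * |x i - xstar i| :=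
      Finset.sum_nonneg fun i hi =>
        mul_nonneg (sub_nonneg.2 (vbound i hi).le) (abs_nonneg _)
    linarith
  · intro y hy hmin
    have h1 : wl1 A y ≤ wl1 A xstar := hmin xstar rfl
    have h2 := key y hy
    have hS : ∑ i ∈ Jc, (wgt A i - |v i|) * |y i - xstar i| = 0 := by
      have hnn : ∀ i ∈ Jc, 0 ≤ (wgt A i - |v i|) * |y i - xstar i| := fun i hi =>
        mul_nonneg (sub_nonneg.2 (vbound i hi).le) (abs_nonneg _)
      have hle : ∑ i ∈ Jc, (wgt A i - |v i|) * |y i - xstar i| ≤ 0 := by linarith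
      exact le_antisymm hle (Finset.sum_nonneg hnn)
    have hJc0 : ∀ i ∈ Jc, y i = xstar i := by
      intro i hi
      have := (Finset.sum_eq_zero_iff_of_nonneg fun i hi =>
        mul_nonneg (sub_nonneg.2 (vbound i hi).le) (abs_nonneg _)).1 hS i hi
      have hcoef : 0 < wgt A i - |v i| := sub_pos.2 (vbound i hi)
      have habs : |y i - xstar i| = 0 := by
        by_contra hne
        exact hne (by
          rcases mul_eq_zero.1 this with h | h
          · exact absurd h hcoef.ne'
          · exact h)
      have := abs_eq_zero.1 habs
      linarith [this]
    have hJ0 : ∀ j ∈ J, y j = xstar j := by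
      intro j hj
      have h3 := kerid y hy j hj
      have h4 : ∑ i ∈ Jc, proj A (stdBasis n j) i * (y i - xstar i) = 0 :=
        Finset.sum_eq_zero fun i hi => by rw [hJc0 i hi, sub_self, mul_zero]
      rw [h4, neg_zero] at h3
      have := (pow_pos (wpos j) 2).ne'
      have h5 : y j - xstar j = 0 := by
        rcases mul_eq_zero.1 h3 with h | h
        · exact absurd h this
        · exact h
      linarith
    ext i
    by_cases hi : xstar i ≠ 0
    · exact hJ0 i ((memJ i).2 hi)
    · exact hJc0 i ((memJc i).2 (not_not.1 hi))
end

section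
/- Let x* ∈ ℝⁿ with support J = supp(x*). Suppose there exists a vector c ∈ ℝⁿ such that ⟨P e_i, c⟩ = ‖P e_i‖₂ · sgn(x*_i) for every i ∈ J and |⟨P e_i, c⟩| < ‖P e_i‖₂ for every i ∉ J. Then every minimizer y of the weighted ℓ1 norm ‖W x‖₁ = Σ_{i=1}^n w_i |x_i| subject to A x = A x* satisfies, for every index k ∈ {1,…,n}: either y_k = 0 or sgn(y_k) = sgn(x*_k). In particular no source is misinterpreted as a sink or vice versa. -/
open scoped RealInnerProductSpace Classical

lemma proj_decomp {m n : ℕ} (A : EuclideanSpace ℝ (Fin n) →ₗ[ℝ] EuclideanSpace ℝ (Fin m))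
    (x : EuclideanSpace ℝ (Fin n)) :
    proj A x = ∑ i, x i • proj A (stdBasis n i) := by
  have hx : x = ∑ i, x i • stdBasis n i := by
    have := (EuclideanSpace.basisFun (Fin n) ℝ).sum_repr x
    simp only [EuclideanSpace.basisFun_repr, EuclideanSpace.basisFun_apply] at this
    exact this.symm
  calc proj A x = proj A (∑ i, x i • stdBasis n i) := by rw [← hx]
  _ = ∑ i, x i • proj A (stdBasis n i) := by
    simp [proj, map_sum, map_smul]

lemma mul_sign_eq_abs (r : ℝ) : r * Real.sign r = |r| := by
  rcases lt_trichotomy r 0 with h | h | h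
  · rw [Real.sign_of_neg h, abs_of_neg h]; ring
  · simp [h]
  · rw [Real.sign_of_pos h, abs_of_pos h]; ring

theorem stmt4 {m n : ℕ}
    (A : EuclideanSpace ℝ (Fin n) →ₗ[ℝ] EuclideanSpace ℝ (Fin m))
    (hA : ∀ i, stdBasis n i ∉ LinearMap.ker A)
    (xstar c : EuclideanSpace ℝ (Fin n))
    (hc1 : ∀ i, xstar i ≠ 0 →
      ⟪proj A (stdBasis n i), c⟫ = ‖proj A (stdBasis n i)‖ * Real.sign (xstar i))
    (hc2 : ∀ i, xstar i = 0 →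
      |⟪proj A (stdBasis n i), c⟫| < ‖proj A (stdBasis n i)‖)
    (y : EuclideanSpace ℝ (Fin n)) (hfeas : A y = A xstar)
    (hmin : ∀ x : EuclideanSpace ℝ (Fin n), A x = A xstar → wl1 A y ≤ wl1 A x) :
    ∀ k, y k = 0 ∨ Real.sign (y k) = Real.sign (xstar k) := by
  classical
  set K := LinearMap.ker A with hK
  set t : Fin n → ℝ := fun i => ⟪proj A (stdBasis n i), c⟫ with ht
  have hti : ∀ i, t i = ⟪proj A (stdBasis n i), c⟫ := fun i => rfl
  -- inner product expansion
  have hinner : ∀ x : EuclideanSpace ℝ (Fin n),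
      ⟪proj A x, c⟫ = ∑ i, x i * t i := by
    intro x
    rw [proj_decomp A x, sum_inner]
    simp only [real_inner_smul_left, ht]
  -- proj A y = proj A xstar
  have hmem : y - xstar ∈ K := by
    simp [hK, LinearMap.mem_ker, map_sub, hfeas]
  have hpz : proj A (y - xstar) = 0 := by
    have h2 : y - xstar ∈ Kᗮᗮ := Submodule.le_orthogonal_orthogonal K hmem
    simp only [proj]
    rw [Submodule.orthogonalProjectionOnto_apply_of_mem_orthogonal h2]
    rfl
  have hpeq : proj A y = proj A xstar := by
    have h3 : proj A y - proj A xstar = 0 := by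
      rw [← hpz]; simp [proj, map_sub]
    exact sub_eq_zero.mp h3
  -- weights are positive
  have hwpos : ∀ i, 0 < wgt A i := by
    intro i
    rw [wgt, norm_pos_iff]
    intro h0
    apply hA i
    have : Submodule.orthogonalProjectionOnto Kᗮ (stdBasis n i) = 0 := by
      exact Subtype.coe_injective h0
    rw [Submodule.orthogonalProjectionOnto_eq_zero_iff] at this
    rwa [Submodule.orthogonal_orthogonal] at this
  -- key sum identity
  have hS : ∑ i, y i * t i = wl1 A xstar := by
    rw [← hinner y, hpeq, hinner xstar, wl1]
    refine Finset.sum_congr rfl fun i _ => ?_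
    by_cases h : xstar i = 0
    · simp [h]
    · rw [hti, hc1 i h, wgt]
      rw [show xstar i * (‖proj A (stdBasis n i)‖ * Real.sign (xstar i))
            = ‖proj A (stdBasis n i)‖ * (xstar i * Real.sign (xstar i)) by ring,
        mul_sign_eq_abs]
  -- bound |t i| ≤ wgt i
  have hbound : ∀ i, |t i| ≤ wgt A i := by
    intro i
    by_cases h : xstar i = 0
    · exact (hc2 i h).le
    · rw [hti, hc1 i h, abs_mul, abs_norm, wgt]
      have : |Real.sign (xstar i)| ≤ 1 := by
        rcases Real.sign_apply_eq (xstar i) with h1 | h1 | h1 <;> rw [h1] <;> norm_num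
      nlinarith [norm_nonneg (proj A (stdBasis n i))]
  have hterm : ∀ i, y i * t i ≤ wgt A i * |y i| := by
    intro i
    calc y i * t i ≤ |y i * t i| := le_abs_self _
    _ = |y i| * |t i| := abs_mul _ _
    _ ≤ |y i| * wgt A i := mul_le_mul_of_nonneg_left (hbound i) (abs_nonneg _)
    _ = wgt A i * |y i| := mul_comm _ _
  -- equality of sums
  have hle : wl1 A y ≤ wl1 A xstar := hmin xstar rfl
  have hge : wl1 A xstar ≤ wl1 A y := by
    rw [← hS, wl1]
    exact Finset.sum_le_sum fun i _ => hterm i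
  have hsum_eq : ∑ i, y i * t i = ∑ i, wgt A i * |y i| := by
    rw [hS, ← wl1]; linarith
  have heq : ∀ i, y i * t i = wgt A i * |y i| := by
    intro i
    exact (Finset.sum_eq_sum_iff_of_le fun i _ => hterm i).mp hsum_eq i (Finset.mem_univ i)
  -- conclude
  intro k
  by_cases hyk : y k = 0
  · exact Or.inl hyk
  right
  have hyabs : 0 < |y k| := abs_pos.mpr hyk
  have heqk := heq k
  by_cases hxk : xstar k = 0
  · exfalso
    have h1 : y k * t k ≤ |y k| * |t k| := by
      calc y k * t k ≤ |y k * t k| := le_abs_self _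
      _ = |y k| * |t k| := abs_mul _ _
    have h2 : |y k| * |t k| < |y k| * wgt A k :=
      mul_lt_mul_of_pos_left (hc2 k hxk) hyabs
    rw [heqk, mul_comm] at h1
    linarith
  · have hsk : t k = wgt A k * Real.sign (xstar k) := hc1 k hxk
    have hkey : y k * Real.sign (xstar k) = |y k| := by
      have h4 : wgt A k * (y k * Real.sign (xstar k)) = wgt A k * |y k| := by
        rw [← heqk, hsk]; ring
      exact mul_left_cancel₀ (hwpos k).ne' h4
    rcases lt_trichotomy (xstar k) 0 with h | h | h
    · rw [Real.sign_of_neg h] at hkey ⊢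
      have hyneg : y k < 0 := by
        have : y k = -|y k| := by linarith
        rw [this]; linarith
      rw [Real.sign_of_neg hyneg]
    · exact absurd h hxk
    · rw [Real.sign_of_pos h] at hkey ⊢
      have hypos : 0 < y k := by
        have : y k = |y k| := by linarith
        rw [this]; exact hyabs
      rw [Real.sign_of_pos hypos]
end

section
/- Assume the non-parallel condition (NP): A e_i ≠ η A e_j for all indices i ≠ j and all η ∈ ℝ. Let x* ∈ ℝⁿ with support J = supp(x*), and assume supp(P e_j) ∩ supp(P e_k) = ∅ for all j, k ∈ J with j ≠ k. Then there exist real numbers a_j, j ∈ J, such that the vector v = Σ_{j∈J} a_j W⁻¹ P e_j satisfies v_i = sgn(x*_i) for all i ∈ J and v_i ∈ (−1, 1) for all i ∉ J; moreover, for every α > 0 with sgn(x*_j − α a_j) = sgn(x*_j) for all j ∈ J, the vector y*_α = Σ_{j∈J} (x*_j − α a_j) e_j minimizes T_α(x) = ½ ‖P x − P x*‖₂² + α Σ_{i=1}^n w_i |x_i|. -/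
open scoped RealInnerProductSpace Classical

section aux
variable {m n : ℕ} (A : EuclideanSpace ℝ (Fin n) →ₗ[ℝ] EuclideanSpace ℝ (Fin m))

lemma proj_sub (x y : EuclideanSpace ℝ (Fin n)) : proj A (x - y) = proj A x - proj A y := by
  simp [proj]

lemma proj_smul (c : ℝ) (x : EuclideanSpace ℝ (Fin n)) : proj A (c • x) = c • proj A x := by
  simp [proj]

lemma proj_sum {ι : Type*} (s : Finset ι) (f : ι → EuclideanSpace ℝ (Fin n)) :
    proj A (∑ j ∈ s, f j) = ∑ j ∈ s, proj A (f j) := by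
  simp [proj, map_sum]

lemma inner_proj_left (u v : EuclideanSpace ℝ (Fin n)) :
    ⟪proj A u, v⟫ = ⟪u, proj A v⟫ :=
  by have := Submodule.inner_starProjection_left_eq_right (LinearMap.ker A)ᗮ u v; exact this

lemma proj_proj (v : EuclideanSpace ℝ (Fin n)) : proj A (proj A v) = proj A v := by
  simp only [proj]
  rw [Submodule.orthogonalProjectionOnto_mem_subspace_eq_self]

lemma inner_proj_proj (u v : EuclideanSpace ℝ (Fin n)) :
    ⟪proj A u, proj A v⟫ = ⟪u, proj A v⟫ := by
  rw [inner_proj_left, proj_proj]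

lemma inner_proj_proj' (u v : EuclideanSpace ℝ (Fin n)) :
    ⟪proj A u, proj A v⟫ = ⟪proj A u, v⟫ := by
  rw [real_inner_comm, inner_proj_proj, real_inner_comm]

lemma proj_apply (x : EuclideanSpace ℝ (Fin n)) (i : Fin n) :
    proj A x i = ⟪stdBasis n i, proj A x⟫ := by
  simp [stdBasis, EuclideanSpace.inner_single_left]

lemma proj_apply' (x : EuclideanSpace ℝ (Fin n)) (i : Fin n) :
    proj A x i = ⟪proj A (stdBasis n i), proj A x⟫ := by
  rw [proj_apply, ← inner_proj_proj]

lemma proj_eq_zero_iff (x : EuclideanSpace ℝ (Fin n)) :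
    proj A x = 0 ↔ x ∈ LinearMap.ker A := by
  rw [proj, ZeroMemClass.coe_eq_zero, Submodule.orthogonalProjectionOnto_eq_zero_iff,
    Submodule.orthogonal_orthogonal]

lemma inner_eq_sum (u v : EuclideanSpace ℝ (Fin n)) : ⟪u, v⟫ = ∑ i, u i * v i := by
  simp [PiLp.inner_apply, mul_comm]

lemma esum_apply {ι : Type*} (s : Finset ι) (f : ι → EuclideanSpace ℝ (Fin n)) (i : Fin n) :
    (∑ j ∈ s, f j) i = ∑ j ∈ s, f j i := by
  classical
  induction s using Finset.induction with
  | empty => rfl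
  | insert _ _ h ih => rw [Finset.sum_insert h, Finset.sum_insert h, ← ih]; rfl

lemma abs_inner_lt_of_not_parallel (u v : EuclideanSpace ℝ (Fin n)) (hv : v ≠ 0)
    (h : ∀ r : ℝ, u ≠ r • v) : |⟪u, v⟫| < ‖u‖ * ‖v‖ := by
  have hvn : (0:ℝ) < ‖v‖ := norm_pos_iff.mpr hv
  rw [abs_lt]
  constructor
  · have := inner_lt_norm_mul_iff_real (x := -u) (y := v)
    rw [inner_neg_left, norm_neg] at this
    have h2 : ‖v‖ • (-u) ≠ ‖u‖ • v := by
      intro he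
      apply h (-(‖v‖⁻¹ * ‖u‖))
      have h3 : -u = ‖v‖⁻¹ • (‖u‖ • v) := (eq_inv_smul_iff₀ hvn.ne').mpr he
      rw [neg_smul, mul_smul, ← h3, neg_neg]
    linarith [this.mpr h2]
  · apply (inner_lt_norm_mul_iff_real (x := u) (y := v)).mpr
    intro he
    apply h (‖v‖⁻¹ * ‖u‖)
    rw [mul_smul]
    exact (eq_inv_smul_iff₀ hvn.ne').mpr he

lemma real_sign_mul_self (t : ℝ) : Real.sign t * t = |t| := by
  rcases lt_trichotomy t 0 with h | h | h
  · rw [Real.sign_of_neg h, abs_of_neg h]; ring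
  · simp [h]
  · rw [Real.sign_of_pos h, abs_of_pos h]; ring

end aux

theorem stmt9 {m n : ℕ}
    (A : EuclideanSpace ℝ (Fin n) →ₗ[ℝ] EuclideanSpace ℝ (Fin m))
    (hA : ∀ i, stdBasis n i ∉ LinearMap.ker A)
    (hNP : ∀ i j : Fin n, i ≠ j → ∀ η : ℝ, A (stdBasis n i) ≠ η • A (stdBasis n j))
    (xstar : EuclideanSpace ℝ (Fin n))
    (hdisj : ∀ j k : Fin n, xstar j ≠ 0 → xstar k ≠ 0 → j ≠ k →
      ∀ i, proj A (stdBasis n j) i = 0 ∨ proj A (stdBasis n k) i = 0) :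
    ∃ a : Fin n → ℝ,
      (∀ i, xstar i ≠ 0 →
        (∑ j ∈ Finset.univ.filter (fun j => xstar j ≠ 0),
          a j * ((wgt A i)⁻¹ * proj A (stdBasis n j) i)) = Real.sign (xstar i)) ∧
      (∀ i, xstar i = 0 →
        (∑ j ∈ Finset.univ.filter (fun j => xstar j ≠ 0),
          a j * ((wgt A i)⁻¹ * proj A (stdBasis n j) i)) ∈ Set.Ioo (-1 : ℝ) 1) ∧
      ∀ α : ℝ, 0 < α →
        (∀ j, xstar j ≠ 0 → Real.sign (xstar j - α * a j) = Real.sign (xstar j)) →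
        ∀ x : EuclideanSpace ℝ (Fin n),
          (1 / 2) * ‖proj A (∑ j ∈ Finset.univ.filter (fun j => xstar j ≠ 0),
              (xstar j - α * a j) • stdBasis n j) - proj A xstar‖ ^ 2 +
            α * wl1 A (∑ j ∈ Finset.univ.filter (fun j => xstar j ≠ 0),
              (xstar j - α * a j) • stdBasis n j) ≤
          (1 / 2) * ‖proj A x - proj A xstar‖ ^ 2 + α * wl1 A x := by
  classical
  set J : Finset (Fin n) := Finset.univ.filter (fun j => xstar j ≠ 0) with hJdef
  have hJ : ∀ i, i ∈ J ↔ xstar i ≠ 0 := by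
    intro i; simp [hJdef]
  -- positivity of the weights
  have hw : ∀ i, 0 < wgt A i := by
    intro i
    apply norm_pos_iff.mpr
    intro h0
    exact hA i ((proj_eq_zero_iff A _).mp h0)
  -- diagonal entries
  have hself : ∀ i, proj A (stdBasis n i) i = wgt A i ^ 2 := by
    intro i
    rw [proj_apply', real_inner_self_eq_norm_sq]; rfl
  -- the coefficients
  set a : Fin n → ℝ := fun j => Real.sign (xstar j) * (wgt A j)⁻¹ with ha
  set c : Fin n → ℝ := fun i => ∑ j ∈ J, a j * proj A (stdBasis n j) i with hc
  -- value of c on the support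
  have hcJ : ∀ i ∈ J, c i = Real.sign (xstar i) * wgt A i := by
    intro i hi
    show (∑ j ∈ J, a j * proj A (stdBasis n j) i) = _
    rw [Finset.sum_eq_single_of_mem i hi]
    · rw [hself i]
      show Real.sign (xstar i) * (wgt A i)⁻¹ * wgt A i ^ 2 = _
      rw [pow_two]
      field_simp
    · intro j hj hji
      rcases hdisj j i ((hJ j).mp hj) ((hJ i).mp hi) hji i with h0 | h0
      · rw [h0]; ring
      · exfalso
        rw [hself i] at h0
        exact (pow_ne_zero 2 (hw i).ne') h0
  -- strict bound off the support
  have hclt : ∀ i, xstar i = 0 → |c i| < wgt A i := by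
    intro i hi0
    by_cases hz : ∀ j ∈ J, proj A (stdBasis n j) i = 0
    · have : c i = 0 := by
        rw [hc]
        exact Finset.sum_eq_zero fun j hj => by rw [hz j hj, mul_zero]
      rw [this, abs_zero]; exact hw i
    · push_neg at hz
      obtain ⟨j₀, hj₀, hj₀ne⟩ := hz
      have hij₀ : i ≠ j₀ := by
        intro he; exact ((hJ j₀).mp hj₀) (he ▸ hi0)
      have hci : c i = a j₀ * proj A (stdBasis n j₀) i := by
        apply Finset.sum_eq_single_of_mem j₀ hj₀
        intro j hj hji
        rcases hdisj j j₀ ((hJ j).mp hj) ((hJ j₀).mp hj₀) hji i with h0 | h0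
        · rw [h0]; ring
        · exact absurd h0 hj₀ne
      -- strict Cauchy-Schwarz
      have hnp : ∀ r : ℝ, proj A (stdBasis n i) ≠ r • proj A (stdBasis n j₀) := by
        intro r he
        have hker : stdBasis n i - r • stdBasis n j₀ ∈ LinearMap.ker A := by
          rw [← proj_eq_zero_iff A, proj_sub, proj_smul, he, sub_self]
        rw [LinearMap.mem_ker, map_sub, map_smul, sub_eq_zero] at hker
        exact hNP i j₀ hij₀ r hker
      have hv0 : proj A (stdBasis n j₀) ≠ 0 := by
        intro h0; exact hA j₀ ((proj_eq_zero_iff A _).mp h0)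
      have hCS : |⟪proj A (stdBasis n i), proj A (stdBasis n j₀)⟫| < wgt A i * wgt A j₀ :=
        abs_inner_lt_of_not_parallel _ _ hv0 hnp
      have hpa : proj A (stdBasis n j₀) i = ⟪proj A (stdBasis n i), proj A (stdBasis n j₀)⟫ :=
        proj_apply' A _ i
      have hsgn1 : |Real.sign (xstar j₀)| = 1 := by
        rcases lt_trichotomy (xstar j₀) 0 with h | h | h
        · rw [Real.sign_of_neg h]; norm_num
        · exact absurd h ((hJ j₀).mp hj₀)
        · rw [Real.sign_of_pos h]; norm_num
      rw [hci]
      simp only [ha]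
      rw [abs_mul, abs_mul, hsgn1, one_mul, hpa, abs_of_pos (inv_pos.mpr (hw j₀))]
      calc (wgt A j₀)⁻¹ * |⟪proj A (stdBasis n i), proj A (stdBasis n j₀)⟫|
          < (wgt A j₀)⁻¹ * (wgt A i * wgt A j₀) := by
            apply mul_lt_mul_of_pos_left hCS (inv_pos.mpr (hw j₀))
        _ = wgt A i := by
            rw [inv_mul_eq_div, mul_comm (wgt A i), mul_div_assoc, mul_comm,
              div_mul_cancel₀ _ (hw j₀).ne']
  have hcle : ∀ i, |c i| ≤ wgt A i := by
    intro i
    by_cases hi0 : xstar i = 0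
    · exact (hclt i hi0).le
    · rw [hcJ i ((hJ i).mpr hi0), abs_mul]
      have hsgn1 : |Real.sign (xstar i)| = 1 := by
        rcases lt_trichotomy (xstar i) 0 with h | h | h
        · rw [Real.sign_of_neg h]; norm_num
        · exact absurd h hi0
        · rw [Real.sign_of_pos h]; norm_num
      rw [hsgn1, one_mul, abs_of_pos (hw i)]
  -- the sums in the statement equal (wgt A i)⁻¹ * c i
  have hsum_eq : ∀ i : Fin n,
      (∑ j ∈ J, a j * ((wgt A i)⁻¹ * proj A (stdBasis n j) i)) = (wgt A i)⁻¹ * c i := by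
    intro i
    show _ = (wgt A i)⁻¹ * ∑ j ∈ J, a j * proj A (stdBasis n j) i
    rw [Finset.mul_sum]
    exact Finset.sum_congr rfl fun j _ => by ring
  refine ⟨a, ?_, ?_, ?_⟩
  · intro i hi
    rw [hsum_eq i, hcJ i ((hJ i).mpr hi)]
    rw [mul_comm (Real.sign (xstar i)), ← mul_assoc, inv_mul_cancel₀ (hw i).ne', one_mul]
  · intro i hi0
    have h1 : |(wgt A i)⁻¹ * c i| < 1 := by
      rw [abs_mul, abs_of_pos (inv_pos.mpr (hw i))]
      calc (wgt A i)⁻¹ * |c i| < (wgt A i)⁻¹ * wgt A i :=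
            mul_lt_mul_of_pos_left (hclt i hi0) (inv_pos.mpr (hw i))
        _ = 1 := inv_mul_cancel₀ (hw i).ne'
    rw [hsum_eq i]
    rw [abs_lt] at h1
    exact ⟨h1.1, h1.2⟩
  · intro α hα hsgn x
    set y : EuclideanSpace ℝ (Fin n) := ∑ j ∈ J, (xstar j - α * a j) • stdBasis n j with hy
    have hy_apply : ∀ i, y i = if i ∈ J then xstar i - α * a i else 0 := by
      intro i
      rw [hy, esum_apply]
      have : ∀ j ∈ J, ((xstar j - α * a j) • stdBasis n j) i
          = if i = j then xstar j - α * a j else 0 := by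
        intro j _
        show (xstar j - α * a j) * stdBasis n j i = _
        simp [stdBasis, EuclideanSpace.single_apply, mul_ite]
      rw [Finset.sum_congr rfl this, Finset.sum_ite_eq J i (fun j => xstar j - α * a j)]
    -- y - xstar
    have hyx : y - xstar = (-α) • ∑ j ∈ J, a j • stdBasis n j := by
      ext i
      have hr : ((-α) • ∑ j ∈ J, a j • stdBasis n j) i
          = -α * (if i ∈ J then a i else 0) := by
        show -α * ((∑ j ∈ J, a j • stdBasis n j) i) = _
        rw [esum_apply]
        congr 1
        have : ∀ j ∈ J, (a j • stdBasis n j) i = if i = j then a j else 0 := by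
          intro j _
          show a j * stdBasis n j i = _
          simp [stdBasis, EuclideanSpace.single_apply, mul_ite]
        rw [Finset.sum_congr rfl this, Finset.sum_ite_eq J i a]
      show y i - xstar i = _
      rw [hr, hy_apply i]
      by_cases hi : i ∈ J
      · simp only [hi, if_true]; ring
      · have : xstar i = 0 := by
          by_contra h0; exact hi ((hJ i).mpr h0)
        simp [hi, this]
    have hPyx : proj A y - proj A xstar = (-α) • ∑ j ∈ J, a j • proj A (stdBasis n j) := by
      rw [← proj_sub, hyx, proj_smul, proj_sum]
      congr 1
      exact Finset.sum_congr rfl fun j _ => proj_smul A (a j) _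
    -- inner product computation
    have hinner : ∀ z : EuclideanSpace ℝ (Fin n),
        ⟪proj A y - proj A xstar, proj A z⟫ = -α * ∑ i, c i * z i := by
      intro z
      rw [hPyx, real_inner_smul_left]
      congr 1
      rw [sum_inner]
      have step : ∀ j ∈ J, ⟪a j • proj A (stdBasis n j), proj A z⟫
          = ∑ i, (a j * proj A (stdBasis n j) i) * z i := by
        intro j _
        rw [real_inner_smul_left, inner_proj_proj', inner_eq_sum, Finset.mul_sum]
        exact Finset.sum_congr rfl fun i _ => by ring
      rw [Finset.sum_congr rfl step, Finset.sum_comm]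
      apply Finset.sum_congr rfl
      intro i _
      show _ = c i * z i
      show _ = (∑ j ∈ J, a j * proj A (stdBasis n j) i) * z i
      rw [Finset.sum_mul]
    -- wl1 of y
    have hwl1y : wl1 A y = ∑ i, c i * y i := by
      unfold wl1
      apply Finset.sum_congr rfl
      intro i _
      by_cases hi : i ∈ J
      · have hyi : y i = xstar i - α * a i := by rw [hy_apply i, if_pos hi]
        have hcy : c i = Real.sign (xstar i) * wgt A i := hcJ i hi
        have hsy : Real.sign (y i) = Real.sign (xstar i) := by
          rw [hyi]; exact hsgn i ((hJ i).mp hi)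
        rw [hcy, ← hsy]
        calc wgt A i * |y i| = wgt A i * (Real.sign (y i) * y i) := by rw [real_sign_mul_self]
          _ = Real.sign (y i) * wgt A i * y i := by ring
      · have hyi : y i = 0 := by rw [hy_apply i, if_neg hi]
        rw [hyi]; simp
    -- pointwise bound
    have hterm : ∀ i, c i * x i ≤ wgt A i * |x i| := by
      intro i
      calc c i * x i ≤ |c i * x i| := le_abs_self _
        _ = |c i| * |x i| := abs_mul _ _
        _ ≤ wgt A i * |x i| := mul_le_mul_of_nonneg_right (hcle i) (abs_nonneg _)
    have hS : ∑ i, c i * x i ≤ ∑ i, wgt A i * |x i| :=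
      Finset.sum_le_sum fun i _ => hterm i
    -- norm expansion
    have hdecomp : proj A x - proj A xstar
        = (proj A x - proj A y) + (proj A y - proj A xstar) := by abel
    have hexp : ‖proj A x - proj A xstar‖ ^ 2
        = ‖proj A x - proj A y‖ ^ 2
          + 2 * ⟪proj A x - proj A y, proj A y - proj A xstar⟫
          + ‖proj A y - proj A xstar‖ ^ 2 := by
      rw [hdecomp, norm_add_sq_real]
    have hcross : ⟪proj A x - proj A y, proj A y - proj A xstar⟫
        = -α * (∑ i, c i * x i - ∑ i, c i * y i) := by
      rw [real_inner_comm, ← proj_sub A x y, hinner (x - y)]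
      congr 1
      rw [← Finset.sum_sub_distrib]
      apply Finset.sum_congr rfl
      intro i _
      show c i * (x i - y i) = _
      ring
    have hwl1x : wl1 A x = ∑ i, wgt A i * |x i| := rfl
    have hnn : (0:ℝ) ≤ ‖proj A x - proj A y‖ ^ 2 := sq_nonneg _
    have hgain : 0 ≤ α * (∑ i, wgt A i * |x i| - ∑ i, c i * x i) :=
      mul_nonneg hα.le (sub_nonneg.mpr hS)
    rw [hexp, hcross, hwl1x, hwl1y]
    ring_nf
    nlinarith [hnn, hgain]
end

section
/- Let x* ∈ ℝⁿ be a minimizer of the weighted ℓ1 norm ‖W x‖₁ = Σ_{i=1}^n w_i |x_i| subject to A x = A x*. If q ∈ ℝⁿ is a nonzero vector with A q = 0 and supp(q) ⊆ supp(x*), then there exists t̂ > 0 such that for every t ∈ [0, t̂] the vector x* + t q is also a minimizer of ‖W x‖₁ subject to A x = A x*; in particular the minimizer is not unique. -/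
open scoped RealInnerProductSpace Classical

lemma abs_add_sign {a c : ℝ} (h : |c| ≤ |a|) : |a + c| = |a| + c * Real.sign a := by
  rcases lt_trichotomy a 0 with ha | ha | ha
  · rw [Real.sign_of_neg ha]
    rw [abs_of_neg ha] at h
    have : a + c ≤ 0 := by
      have := (abs_le.mp h).2
      linarith
    rw [abs_of_nonpos this, abs_of_neg ha]; ring
  · subst ha
    have : c = 0 := by simpa using h
    simp [this]
  · rw [Real.sign_of_pos ha]
    rw [abs_of_pos ha] at h
    have : 0 ≤ a + c := by
      have := (abs_le.mp h).1
      linarith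
    rw [abs_of_nonneg this, abs_of_pos ha]; ring

theorem stmt14 {m n : ℕ}
    (A : EuclideanSpace ℝ (Fin n) →ₗ[ℝ] EuclideanSpace ℝ (Fin m))
    (hA : ∀ i, stdBasis n i ∉ LinearMap.ker A)
    (xstar : EuclideanSpace ℝ (Fin n))
    (hmin : ∀ x : EuclideanSpace ℝ (Fin n), A x = A xstar → wl1 A xstar ≤ wl1 A x)
    (q : EuclideanSpace ℝ (Fin n)) (hq : q ≠ 0) (hAq : A q = 0)
    (hsupp : ∀ i, q i ≠ 0 → xstar i ≠ 0) :
    ∃ that : ℝ, 0 < that ∧ ∀ t ∈ Set.Icc (0 : ℝ) that,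
      A (xstar + t • q) = A xstar ∧
      ∀ x : EuclideanSpace ℝ (Fin n), A x = A xstar → wl1 A (xstar + t • q) ≤ wl1 A x := by
  -- q ≠ 0 gives a nonzero coordinate, hence n ≠ 0
  obtain ⟨i0, hi0⟩ : ∃ i, q i ≠ 0 := by
    by_contra h
    push_neg at h
    exact hq (by ext i; simpa using h i)
  have hne : (Finset.univ : Finset (Fin n)).Nonempty := ⟨i0, Finset.mem_univ i0⟩
  -- choose the threshold
  set f : Fin n → ℝ := fun i => if q i = 0 then 1 else |xstar i| / |q i| with hf
  set that : ℝ := Finset.univ.inf' hne f with hthat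
  have hthat_pos : 0 < that := by
    rw [hthat, Finset.lt_inf'_iff]
    intro i _
    rw [hf]
    by_cases h : q i = 0
    · simp [h]
    · simp only [h, if_false]
      exact div_pos (abs_pos.mpr (hsupp i h)) (abs_pos.mpr h)
  have hbound : ∀ i, q i ≠ 0 → that ≤ |xstar i| / |q i| := by
    intro i h
    have := Finset.inf'_le f (Finset.mem_univ i)
    simpa only [hf, h, if_false] using this
  -- feasibility
  have hfeas : ∀ t : ℝ, A (xstar + t • q) = A xstar := by
    intro t
    simp [map_add, map_smul, hAq]
  -- the key affine formula
  set c : ℝ := ∑ i, wgt A i * (q i * Real.sign (xstar i)) with hc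
  have key : ∀ t : ℝ, |t| ≤ that → wl1 A (xstar + t • q) = wl1 A xstar + t * c := by
    intro t ht
    have hper : ∀ i : Fin n, wgt A i * |(xstar + t • q) i| =
        wgt A i * |xstar i| + t * (wgt A i * (q i * Real.sign (xstar i))) := by
      intro i
      have happ : (xstar + t • q) i = xstar i + t * q i := rfl
      have habs : |t * q i| ≤ |xstar i| := by
        by_cases h : q i = 0
        · simp [h]
        · have h1 : that ≤ |xstar i| / |q i| := hbound i h
          have h2 : |t| ≤ |xstar i| / |q i| := le_trans ht h1
          have h3 : (0:ℝ) < |q i| := abs_pos.mpr h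
          rw [abs_mul]
          calc |t| * |q i| ≤ (|xstar i| / |q i|) * |q i| := by
                exact mul_le_mul_of_nonneg_right h2 (le_of_lt h3)
            _ = |xstar i| := by field_simp
      rw [happ, abs_add_sign habs]
      ring
    unfold wl1
    rw [Finset.sum_congr rfl (fun i _ => hper i), Finset.sum_add_distrib, hc,
      Finset.mul_sum]
  -- c = 0
  have hc0 : c = 0 := by
    have h1 : wl1 A xstar ≤ wl1 A xstar + that * c := by
      rw [← key that (by rw [abs_of_pos hthat_pos])]
      exact hmin _ (hfeas that)
    have h2 : wl1 A xstar ≤ wl1 A xstar - that * c := by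
      have := hmin _ (hfeas (-that))
      rw [key (-that) (by rw [abs_neg, abs_of_pos hthat_pos])] at this
      linarith
    nlinarith
  refine ⟨that, hthat_pos, fun t ht => ⟨hfeas t, fun x hx => ?_⟩⟩
  have h1 : |t| ≤ that := by
    rw [abs_of_nonneg ht.1]; exact ht.2
  rw [key t h1, hc0]
  simpa using hmin x hx
end
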